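/- In a finite strategic form game where each player's payoff is given by the Shapley pay scheme applied to a production function (i.e., a free and fair economy), the sum of excess payoffs along any cycle of unilateral deviations equals zero. That is, if x^1, ..., x^k, x^{k+1}=x^1 is a sequence of strategy profiles where each x^{l+1} differs from x^l only in the strategy of some player j_l, then the sum over l of [u_{j_l}(x^{l+1}) - u_{j_l}(x^l)] equals 0. -/

import Mathlib

open Finset

noncomputable section

variable {ι : Type*}

/-- Sub-profile of `x` relative to the reference profile `o`:
agents in `S` play their `x`-coordinate, all others play their reference action. -/
def subp [DecidableEq ι] {X : ι → Type*} (o x : ∀ i, X i) (S : Finset ι) : ∀ i, X i :=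
  fun j => if j ∈ S then x j else o j

/-- The set of active agents at profile `x` (those deviating from the reference `o`). -/
def active [DecidableEq ι] [Fintype ι] {X : ι → Type*} [∀ i, DecidableEq (X i)]
    (o x : ∀ i, X i) : Finset ι :=
  Finset.univ.filter fun j => x j ≠ o j

/-- The multivariate Shapley pay scheme. -/
def Sh [DecidableEq ι] [Fintype ι] {X : ι → Type*} [∀ i, DecidableEq (X i)]
    (o : ∀ i, X i) (f : (∀ i, X i) → ℝ) (i : ι) (x : ∀ i, X i) : ℝ :=
  ∑ S ∈ ((active o x).erase i).powerset,
    ((S.card.factorial * ((active o x).card - S.card - 1).factorial : ℝ) /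
        ((active o x).card.factorial)) *
      (f (subp o x (insert i S)) - f (subp o x S))

end

noncomputable section Aux

variable {ι : Type*} [DecidableEq ι] [Fintype ι] {X : ι → Type*} [∀ i, DecidableEq (X i)]

/-- Hart–Mas-Colell potential. -/
def Phi (o : ∀ i, X i) (f : (∀ i, X i) → ℝ) (x : ∀ i, X i) : ℝ :=
  ∑ S ∈ (active o x).powerset,
    (((S.card - 1).factorial * ((active o x).card - S.card).factorial : ℝ) /
      ((active o x).card.factorial)) * f (subp o x S)

lemma subp_empty (o x : ∀ i, X i) : subp o x (∅ : Finset ι) = o := by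
  funext j; simp [subp]

lemma mem_active {o x : ∀ i, X i} {i : ι} : i ∈ active o x ↔ x i ≠ o i := by
  simp [active]

lemma subp_update (o x : ∀ i, X i) (i : ι) {S : Finset ι} (hi : i ∉ S) :
    subp o (Function.update x i (o i)) S = subp o x S := by
  funext j
  by_cases hj : j ∈ S
  · have : j ≠ i := fun h => hi (h ▸ hj)
    simp [subp, hj, Function.update_of_ne this]
  · simp [subp, hj]

lemma active_update (o x : ∀ i, X i) (i : ι) :
    active o (Function.update x i (o i)) = (active o x).erase i := by
  ext j
  by_cases hj : j = i
  · subst hj; simp [active, Function.update_self]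
  · simp [active, Function.update_of_ne hj, hj, Finset.mem_erase]

lemma subp_insert_of_eq {o x : ∀ i, X i} {i : ι} (h : x i = o i) (S : Finset ι) :
    subp o x (insert i S) = subp o x S := by
  funext j
  by_cases hj : j = i
  · subst hj; simp [subp, h]
  · simp [subp, hj]

/-- Key lemma: the Shapley pay is the discrete gradient of the potential. -/
lemma sh_eq_phi (o : ∀ i, X i) (f : (∀ i, X i) → ℝ) (hf : f o = 0) (i : ι) (x : ∀ i, X i) :
    Sh o f i x = Phi o f x - Phi o f (Function.update x i (o i)) := by
  by_cases hi : x i = o i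
  · -- inactive player: both sides are 0
    have hupd : Function.update x i (o i) = x := by
      funext j; by_cases hj : j = i
      · subst hj; simp [hi]
      · simp [Function.update_of_ne hj]
    rw [hupd, sub_self]
    unfold Sh
    apply Finset.sum_eq_zero
    intro S hS
    rw [subp_insert_of_eq hi, sub_self, mul_zero]
  · -- active player
    have hiA : i ∈ active o x := mem_active.mpr hi
    set A := active o x with hA
    set a := A.card with ha
    have hins : insert i (A.erase i) = A := Finset.insert_erase hiA
    have hcardE : (A.erase i).card = a - 1 := by rw [Finset.card_erase_of_mem hiA]
    have ha1 : 1 ≤ a := Finset.card_pos.mpr ⟨i, hiA⟩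
    -- Phi at the updated profile
    have hPhiY : Phi o f (Function.update x i (o i)) =
        ∑ S ∈ (A.erase i).powerset,
          (((S.card - 1).factorial * ((a - 1) - S.card).factorial : ℝ) /
            ((a - 1).factorial)) * f (subp o x S) := by
      unfold Phi
      rw [active_update, ← hA, hcardE]
      apply Finset.sum_congr rfl
      intro S hS
      have hiS : i ∉ S := fun h =>
        (Finset.mem_erase.mp ((Finset.mem_powerset.mp hS) h)).1 rfl
      rw [subp_update o x i hiS]
    -- Phi at x, split over membership of i
    have hPhiX : Phi o f x =
        (∑ S ∈ (A.erase i).powerset,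
          (((S.card - 1).factorial * (a - S.card).factorial : ℝ) / a.factorial) *
            f (subp o x S)) +
        ∑ S ∈ (A.erase i).powerset,
          ((((insert i S).card - 1).factorial * (a - (insert i S).card).factorial : ℝ) /
            a.factorial) * f (subp o x (insert i S)) := by
      unfold Phi
      rw [← hA, ← ha, ← hins,
        Finset.sum_powerset_insert (Finset.notMem_erase i A)]
      rw [hins]
    rw [hPhiX, hPhiY]
    unfold Sh
    rw [← hA, ← ha]
    rw [eq_sub_iff_add_eq, ← Finset.sum_add_distrib, ← Finset.sum_add_distrib]
    apply Finset.sum_congr rfl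
    intro S hS
    have hiS : i ∉ S := fun h =>
      (Finset.mem_erase.mp ((Finset.mem_powerset.mp hS) h)).1 rfl
    have hcard : (insert i S).card = S.card + 1 := Finset.card_insert_of_notMem hiS
    have hSle : S.card ≤ a - 1 := by
      rw [← hcardE]; exact Finset.card_le_card (Finset.mem_powerset.mp hS)
    by_cases hS0 : S = ∅
    · subst hS0
      simp only [Finset.card_empty, hcard, subp_empty, hf]
      norm_num
    · -- nonempty S: combinatorial identity
      have hs1 : 1 ≤ S.card := Finset.card_pos.mpr (Finset.nonempty_of_ne_empty hS0)
      obtain ⟨t, ht⟩ : ∃ t, S.card = t + 1 := ⟨S.card - 1, by omega⟩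
      obtain ⟨b, hb⟩ : ∃ b, a = S.card + b + 1 := ⟨a - S.card - 1, by omega⟩
      rw [hcard, ht] at *
      rw [hb]
      have e1 : t + 1 + b + 1 - (t + 1) - 1 = b := by omega
      have e2 : t + 1 - 1 = t := by omega
      have e3 : t + 1 + b + 1 - (t + 1) = b + 1 := by omega
      have e4 : t + 1 + 1 - 1 = t + 1 := by omega
      have e5 : t + 1 + b + 1 - (t + 1 + 1) = b := by omega
      have e6 : t + 1 + b + 1 - 1 = t + b + 1 := by omega
      have e7 : t + 1 + b + 1 - 1 - (t + 1) = b := by omega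
      have e8 : t + b + 1 - (t + 1) = b := by omega
      rw [e1, e2, e3, e4, e5, e6, e8]
      have h1 : (t + 1 + b + 1).factorial = (t + 1 + b + 1) * (t + b + 1).factorial := by
        have : t + 1 + b + 1 = (t + b + 1) + 1 := by omega
        rw [this, Nat.factorial_succ]
      have h2 : (t + 1).factorial = (t + 1) * t.factorial := Nat.factorial_succ t
      have h3 : (b + 1).factorial = (b + 1) * b.factorial := Nat.factorial_succ b
      have hne1 : ((t + b + 1).factorial : ℝ) ≠ 0 := by positivity
      have hne2 : ((t + 1 + b + 1 : ℕ) : ℝ) ≠ 0 := by positivity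
      rw [h1, h2, h3]
      push_cast
      field_simp
      ring
end Aux

section Tel
lemma telescope {k : ℕ} (F : Fin (k + 1) → ℝ) :
    ∑ l : Fin k, (F l.succ - F l.castSucc) = F (Fin.last k) - F 0 := by
  induction k with
  | zero => simp
  | succ n ih =>
    rw [Fin.sum_univ_castSucc]
    have := ih (fun m => F m.castSucc)
    have hsum : ∑ l : Fin n, (F l.castSucc.succ - F l.castSucc.castSucc) =
        F (Fin.last n).castSucc - F 0 := by
      calc ∑ l : Fin n, (F l.castSucc.succ - F l.castSucc.castSucc)
          = ∑ l : Fin n, (F l.succ.castSucc - F l.castSucc.castSucc) := by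
            simp only [Fin.succ_castSucc]
        _ = F (Fin.last n).castSucc - F 0 := by
            simpa using this
    rw [hsum]
    have : (Fin.last n).succ = Fin.last (n + 1) := rfl
    simp [Fin.succ_last]
end Tel

/-- In a free and fair economy (payoffs given by the Shapley pay scheme),
the sum of excess payoffs along any cycle of unilateral deviations equals zero. -/
theorem stmt_0 {ι : Type*} [DecidableEq ι] [Fintype ι] {X : ι → Type*}
    [∀ i, Fintype (X i)] [∀ i, DecidableEq (X i)]
    (o : ∀ i, X i) (f : (∀ i, X i) → ℝ) (hf : f o = 0)
    (k : ℕ) (hk : 0 < k) (x : Fin (k + 1) → ∀ i, X i) (j : Fin k → ι)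
    (hcyc : x (Fin.last k) = x 0)
    (hdev : ∀ l : Fin k, ∀ m : ι, m ≠ j l → x l.castSucc m = x l.succ m) :
    ∑ l : Fin k, (Sh o f (j l) (x l.succ) - Sh o f (j l) (x l.castSucc)) = 0 := by
  have key : ∀ l : Fin k, Sh o f (j l) (x l.succ) - Sh o f (j l) (x l.castSucc)
      = Phi o f (x l.succ) - Phi o f (x l.castSucc) := by
    intro l
    have hupd : Function.update (x l.succ) (j l) (o (j l)) =
        Function.update (x l.castSucc) (j l) (o (j l)) := by
      funext m
      by_cases hm : m = j l
      · subst hm; simp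
      · simp [Function.update_of_ne hm, hdev l m hm]
    rw [sh_eq_phi o f hf, sh_eq_phi o f hf, hupd]
    ring
  simp only [key]
  rw [telescope (fun m => Phi o f (x m))]
  simp [hcyc]
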